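/- For a single crowdsourcing user with non-overlapping requests separated by at least the maximum transfer time (e_i + q_max ≤ s_{i+1}), and a uniform moving cost p(·, d_i) = w_i to requester i's region, the maximum achievable system utility within budget C equals max { Σ_{i∈S} (e_i − s_i) : S ⊆ {1,…,M}, Σ_{i∈S} w_i ≤ C }. -/

import Mathlib

open MeasureTheory

/-- A schedule of a single crowdsourcing user: a sequence of `n+1` visited regions with
arrival/departure times, together with the set of times at which each requester is served. -/
structure Sched (K : Type) (M : ℕ) where
  n : ℕ
  reg : Fin (n + 1) → K
  arr : Fin (n + 1) → ℝ
  dep : Fin (n + 1) → ℝ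
  serve : Fin M → Set ℝ

/-- Total moving cost of a schedule. -/
def Sched.cost {K : Type} {M : ℕ} (p : K → K → ℝ) (Γ : Sched K M) : ℝ :=
  ∑ k : Fin Γ.n, p (Γ.reg k.castSucc) (Γ.reg k.succ)

/-- System utility of a schedule: total service time over all requesters. -/
noncomputable def Sched.util {K : Type} {M : ℕ} (Γ : Sched K M) : ℝ :=
  ∑ i : Fin M, (volume (Γ.serve i)).toReal

/-- Feasibility of a schedule: it starts at `start` at time 0, stays in each region between
arrival and departure, respects transfer times, its moving cost is within the budget `C`,
each requester `i` is only served inside its window `[s i, e i]` while the user is located in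
`i`'s region `d i` (hence never during a transfer), and the single user serves at most one
requester at each time. -/
def Feasible {K : Type} {M : ℕ} (p q : K → K → ℝ) (C : ℝ) (start : K) (d : Fin M → K)
    (s e : Fin M → ℝ) (Γ : Sched K M) : Prop :=
  Γ.reg 0 = start ∧ Γ.arr 0 = 0 ∧
  (∀ k, Γ.arr k ≤ Γ.dep k) ∧
  (∀ k : Fin Γ.n, Γ.dep k.castSucc + q (Γ.reg k.castSucc) (Γ.reg k.succ) ≤ Γ.arr k.succ) ∧
  Γ.cost p ≤ C ∧
  (∀ i, MeasurableSet (Γ.serve i)) ∧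
  (∀ i, Γ.serve i ⊆ Set.Icc (s i) (e i)) ∧
  (∀ i, ∀ t ∈ Γ.serve i, ∃ k, Γ.reg k = d i ∧ t ∈ Set.Icc (Γ.arr k) (Γ.dep k)) ∧
  (∀ i i', i ≠ i' → Disjoint (Γ.serve i) (Γ.serve i'))

/-- Correctness of the Knapsack reduction for a single crowdsourcing user: with requests
separated by at least the maximum transfer time and a uniform moving cost `w i` to requester
`i`'s region, the maximum achievable system utility within budget `C` equals
`max { Σ_{i∈S} (e i − s i) : S ⊆ {1,…,M}, Σ_{i∈S} w i ≤ C }`. -/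
theorem stmt_5 (K : Type) (M : ℕ) (d : Fin M → K) (hd : Function.Injective d)
    (start : K) (hstart : start ∉ Set.range d)
    (s e : Fin M → ℝ) (hse : ∀ i, s i ≤ e i)
    (w : Fin M → ℝ) (hw : ∀ i, 0 ≤ w i)
    (qmax : ℝ) (hqmax : 0 ≤ qmax)
    (q : K → K → ℝ) (hq0 : ∀ k, q k k = 0)
    (hqnn : ∀ k₁ k₂, 0 ≤ q k₁ k₂) (hqle : ∀ k₁ k₂, q k₁ k₂ ≤ qmax)
    (hqtri : ∀ k₁ k₂ k₃, q k₁ k₂ ≤ q k₁ k₃ + q k₃ k₂)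
    (p : K → K → ℝ) (hp0 : ∀ k, p k k = 0) (hpnn : ∀ k₁ k₂, 0 ≤ p k₁ k₂)
    (hptri : ∀ k₁ k₂ k₃, p k₁ k₂ ≤ p k₁ k₃ + p k₃ k₂)
    (hpw : ∀ (k : K) (i : Fin M), k ≠ d i → p k (d i) = w i)
    (hsep : ∀ i j : Fin M, (i : ℕ) + 1 = (j : ℕ) → e i + qmax ≤ s j)
    (hfirst : ∀ i, qmax ≤ s i)
    (C : ℝ) (hC : 0 ≤ C) :
    sSup {u : ℝ | ∃ Γ : Sched K M, Feasible p q C start d s e Γ ∧ u = Γ.util}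
      = sSup {u : ℝ | ∃ S : Finset (Fin M), (∑ i ∈ S, w i) ≤ C ∧ u = ∑ i ∈ S, (e i - s i)} := by
  classical
  set A := {u : ℝ | ∃ Γ : Sched K M, Feasible p q C start d s e Γ ∧ u = Γ.util} with hA
  set B := {u : ℝ | ∃ S : Finset (Fin M), (∑ i ∈ S, w i) ≤ C ∧ u = ∑ i ∈ S, (e i - s i)} with hB
  -- chain separation lemma
  have chain : ∀ i j : Fin M, (i : ℕ) < (j : ℕ) → e i + qmax ≤ s j := by
    intro i j hij
    obtain ⟨n, hn⟩ : ∃ n : ℕ, (j : ℕ) = (i : ℕ) + 1 + n := ⟨(j : ℕ) - (i : ℕ) - 1, by omega⟩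
    clear hij
    induction n generalizing j with
    | zero => exact hsep i j (by omega)
    | succ n ih =>
        have hj' : (i : ℕ) + 1 + n < M := by omega
        set j' : Fin M := ⟨(i : ℕ) + 1 + n, hj'⟩ with hj'def
        have h1 : e i + qmax ≤ s j' := ih j' rfl
        have h2 : e j' + qmax ≤ s j := hsep j' j (by simp [hj'def]; omega)
        have := hse j'
        linarith
  -- Part 1: every knapsack value is achieved by a feasible schedule, i.e. B ⊆ A
  have hBA : B ⊆ A := by
    rintro u ⟨S, hSC, rfl⟩
    set m := S.card with hm
    set f := S.orderEmbOfFin (rfl : S.card = m) with hf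
    have hfmem : ∀ k, f k ∈ S := fun k => S.orderEmbOfFin_mem rfl k
    have hfsurj : ∀ i ∈ S, ∃ k, f k = i := by
      intro i hi
      have : (i : Fin M) ∈ Set.range f := by
        rw [hf, Finset.range_orderEmbOfFin]; exact hi
      exact this
    have hfimg : Finset.image f Finset.univ = S := by
      ext i
      simp only [Finset.mem_image, Finset.mem_univ, true_and]
      constructor
      · rintro ⟨k, rfl⟩; exact hfmem k
      · exact hfsurj i
    refine ⟨⟨m, Fin.cases start (fun k => d (f k)), Fin.cases 0 (fun k => s (f k)),
        Fin.cases 0 (fun k => e (f k)),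
        fun i => if i ∈ S then Set.Ioc (s i) (e i) else ∅⟩, ?_, ?_⟩
    · refine ⟨rfl, rfl, ?_, ?_, ?_, ?_, ?_, ?_, ?_⟩
      · intro k
        induction k using Fin.cases with
        | zero => simp
        | succ k => simpa using hse (f k)
      · intro k
        rcases k with ⟨kv, hkv⟩
        replace hkv : kv < m := hkv
        match kv with
        | 0 =>
            have hcs : Fin.castSucc (⟨0, hkv⟩ : Fin m) = 0 := rfl
            simp only [Fin.succ, hcs, Fin.cases_zero, Fin.cases_succ]
            have h1 : q start (d (f ⟨0, hkv⟩)) ≤ qmax := hqle _ _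
            have h2 : qmax ≤ s (f ⟨0, hkv⟩) := hfirst _
            show (0 : ℝ) + q start (d (f ⟨0, hkv⟩)) ≤ s (f ⟨0, hkv⟩)
            linarith
        | v + 1 =>
            have hv : v < m := by omega
            have hcs : Fin.castSucc (⟨v + 1, hkv⟩ : Fin m) = Fin.succ ⟨v, hv⟩ := rfl
            simp only [hcs, Fin.cases_succ]
            have hlt : f ⟨v, hv⟩ < f ⟨v + 1, hkv⟩ := by
              apply (S.orderEmbOfFin rfl).strictMono
              exact Fin.mk_lt_mk.2 (by omega)
            have h1 : e (f ⟨v, hv⟩) + qmax ≤ s (f ⟨v + 1, hkv⟩) := chain _ _ hlt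
            have h2 : q (d (f ⟨v, hv⟩)) (d (f ⟨v + 1, hkv⟩)) ≤ qmax := hqle _ _
            show e (f ⟨v, hv⟩) + q (d (f ⟨v, hv⟩)) (d (f ⟨v + 1, hkv⟩)) ≤ s (f ⟨v + 1, hkv⟩)
            linarith
      · -- cost
        show (∑ k : Fin m, p _ _) ≤ C
        have hterm : ∀ k : Fin m,
            p ((Fin.cases start (fun k => d (f k)) : Fin (m+1) → K) k.castSucc)
              ((Fin.cases start (fun k => d (f k)) : Fin (m+1) → K) k.succ) = w (f k) := by
          intro k
          rcases k with ⟨kv, hkv⟩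
          match kv with
          | 0 =>
              have hcs : Fin.castSucc (⟨0, hkv⟩ : Fin m) = 0 := rfl
              simp only [hcs, Fin.cases_zero, Fin.cases_succ]
              exact hpw start (f ⟨0, hkv⟩) (fun h => hstart ⟨_, h.symm⟩)
          | v + 1 =>
              have hv : v < m := by omega
              have hcs : Fin.castSucc (⟨v + 1, hkv⟩ : Fin m) = Fin.succ ⟨v, hv⟩ := rfl
              simp only [hcs, Fin.cases_succ]
              apply hpw
              intro h
              have := hd h
              have hlt : f ⟨v, hv⟩ < f ⟨v + 1, hkv⟩ := by
                apply (S.orderEmbOfFin rfl).strictMono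
                exact Fin.mk_lt_mk.2 (by omega)
              exact absurd this (ne_of_lt hlt)
        calc (∑ k : Fin m, p _ _) = ∑ k : Fin m, w (f k) := Finset.sum_congr rfl (fun k _ => hterm k)
          _ = ∑ i ∈ S, w i := by
              have h := Finset.sum_image (f := w) (g := (f : Fin m → Fin M)) (s := Finset.univ)
                (fun a _ b _ hab => (S.orderEmbOfFin (rfl : S.card = m)).injective hab)
              rw [hfimg] at h
              exact h.symm
          _ ≤ C := hSC
      · intro i
        by_cases hi : i ∈ S <;> simp [hi, measurableSet_Ioc]
      · intro i
        by_cases hi : i ∈ S <;> simp [hi, Set.Ioc_subset_Icc_self]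
      · intro i t ht
        by_cases hi : i ∈ S
        · simp only [hi, if_true] at ht
          obtain ⟨k, hk⟩ := hfsurj i hi
          refine ⟨Fin.succ k, ?_, ?_⟩
          · simp [hk]
          · simp only [Fin.cases_succ, hk]
            exact Set.Ioc_subset_Icc_self ht
        · simp [hi] at ht
      · intro i i' hii'
        by_cases hi : i ∈ S
        · by_cases hi' : i' ∈ S
          · simp only [hi, hi', if_true]
            rcases lt_or_gt_of_ne hii' with h | h
            · have h1 : e i + qmax ≤ s i' := chain i i' h
              rw [Set.disjoint_left]
              rintro t ⟨_, ht2⟩ ⟨ht3, _⟩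
              linarith
            · have h1 : e i' + qmax ≤ s i := chain i' i h
              rw [Set.disjoint_left]
              rintro t ⟨ht1, _⟩ ⟨_, ht4⟩
              linarith
          · simp [hi', Set.disjoint_empty]
        · simp [hi, Set.empty_disjoint]
    · -- utility value
      show (∑ i ∈ S, (e i - s i)) = ∑ i : Fin M, (volume (if i ∈ S then Set.Ioc (s i) (e i) else ∅)).toReal
      have key : ∀ i : Fin M, (volume (if i ∈ S then Set.Ioc (s i) (e i) else ∅)).toReal
          = if i ∈ S then e i - s i else 0 := by
        intro i
        by_cases hi : i ∈ S
        · simp [hi, Real.volume_Ioc, ENNReal.toReal_ofReal (sub_nonneg.2 (hse i))]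
        · simp [hi]
      rw [Finset.sum_congr rfl (fun i _ => key i), Finset.sum_ite_mem, Finset.univ_inter]
  -- Part 2: every feasible schedule is dominated by some knapsack value
  have hdom : ∀ a ∈ A, ∃ b ∈ B, a ≤ b := by
    rintro a ⟨Γ, ⟨h0, ha0, had, htr, hcost, hms, hsub, hloc, hdisj⟩, rfl⟩
    set T : Finset (Fin M) := Finset.univ.filter (fun i => (Γ.serve i).Nonempty) with hT
    have hTmem : ∀ i, i ∈ T ↔ (Γ.serve i).Nonempty := by
      intro i; simp [hT]
    -- choose minimal visit index for each served requester
    have hex : ∀ i : Fin M, ∃ k : Fin (Γ.n + 1),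
        i ∈ T → Γ.reg k = d i ∧ ∀ k' < k, Γ.reg k' ≠ d i := by
      intro i
      by_cases hi : i ∈ T
      · obtain ⟨t, ht⟩ := (hTmem i).1 hi
        obtain ⟨k₀, hk₀, -⟩ := hloc i t ht
        set F : Finset (Fin (Γ.n + 1)) := Finset.univ.filter (fun k => Γ.reg k = d i) with hF
        have hFne : F.Nonempty := ⟨k₀, by simp [hF, hk₀]⟩
        refine ⟨F.min' hFne, fun _ => ⟨?_, ?_⟩⟩
        · have := F.min'_mem hFne
          simp [hF] at this
          exact this
        · intro k' hk' hreg
          have : F.min' hFne ≤ k' := F.min'_le k' (by simp [hF, hreg])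
          exact absurd hk' (not_lt.2 this)
      · exact ⟨0, fun h => absurd h hi⟩
    choose g hg using hex
    have hgne : ∀ i ∈ T, 1 ≤ (g i : ℕ) := by
      intro i hi
      rcases Nat.eq_zero_or_pos (g i : ℕ) with h | h
      · exfalso
        have hgz : g i = 0 := Fin.ext h
        have hreg := (hg i hi).1
        rw [hgz, h0] at hreg
        exact hstart ⟨i, hreg.symm⟩
      · exact h
    -- the step entering the region of i ∈ T
    have hstep : ∀ x : {i // i ∈ T}, ((g x : ℕ) - 1) < Γ.n := by
      intro x
      have h1 := hgne x x.2
      have h2 := (g (x : Fin M)).isLt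
      omega
    set ι : {i // i ∈ T} → Fin Γ.n := fun x => ⟨(g x : ℕ) - 1, hstep x⟩ with hι
    have hιsucc : ∀ x : {i // i ∈ T}, (ι x).succ = g (x : Fin M) := by
      intro x
      apply Fin.ext
      have := hgne x x.2
      simp [hι]
      omega
    have hιcast : ∀ x : {i // i ∈ T}, ((ι x).castSucc : Fin (Γ.n + 1)) < g (x : Fin M) := by
      intro x
      have := hgne x x.2
      simp only [Fin.lt_def, Fin.coe_castSucc, hι]
      omega
    have hιinj : Function.Injective ι := by
      intro x y hxy
      have h1 := hgne x x.2
      have h2 := hgne y y.2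
      have hval : (g (x : Fin M) : ℕ) = (g (y : Fin M) : ℕ) := by
        have := congrArg (fun z : Fin Γ.n => (z : ℕ)) hxy
        simp [hι] at this
        omega
      have hgeq : g (x : Fin M) = g (y : Fin M) := Fin.ext hval
      have e1 := (hg x x.2).1
      have e2 := (hg y y.2).1
      rw [hgeq, e2] at e1
      exact Subtype.ext (hd e1.symm)
    have hterm : ∀ x : {i // i ∈ T},
        p (Γ.reg (ι x).castSucc) (Γ.reg (ι x).succ) = w (x : Fin M) := by
      intro x
      rw [hιsucc x, (hg x x.2).1]
      exact hpw _ _ ((hg x x.2).2 _ (hιcast x))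
    -- cost lower bound
    have hwcost : (∑ i ∈ T, w i) ≤ Γ.cost p := by
      have h1 : (∑ i ∈ T, w i) = ∑ x ∈ T.attach, w (x : Fin M) :=
        (Finset.sum_attach T w).symm
      have h2 : (∑ x ∈ T.attach, w (x : Fin M))
          = ∑ x ∈ T.attach, p (Γ.reg (ι x).castSucc) (Γ.reg (ι x).succ) :=
        Finset.sum_congr rfl (fun x _ => (hterm x).symm)
      have h3 : (∑ x ∈ T.attach, p (Γ.reg (ι x).castSucc) (Γ.reg (ι x).succ))
          = ∑ k ∈ T.attach.image ι, p (Γ.reg k.castSucc) (Γ.reg k.succ) :=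
        (Finset.sum_image (f := fun k : Fin Γ.n => p (Γ.reg k.castSucc) (Γ.reg k.succ))
          (fun a _ b _ hab => hιinj hab)).symm
      have h4 : (∑ k ∈ T.attach.image ι, p (Γ.reg k.castSucc) (Γ.reg k.succ))
          ≤ ∑ k : Fin Γ.n, p (Γ.reg k.castSucc) (Γ.reg k.succ) :=
        Finset.sum_le_sum_of_subset_of_nonneg (Finset.subset_univ _)
          (fun k _ _ => hpnn _ _)
      rw [h1, h2, h3]
      exact h4
    -- utility upper bound
    have hub : Γ.util ≤ ∑ i ∈ T, (e i - s i) := by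
      have h1 : Γ.util = ∑ i ∈ T, (volume (Γ.serve i)).toReal := by
        refine (Finset.sum_subset (Finset.subset_univ T) ?_).symm
        intro i _ hi
        have : Γ.serve i = ∅ := Set.not_nonempty_iff_eq_empty.1 ((hTmem i).not.1 hi)
        simp [this]
      rw [h1]
      apply Finset.sum_le_sum
      intro i _
      have hmono : volume (Γ.serve i) ≤ volume (Set.Icc (s i) (e i)) :=
        measure_mono (hsub i)
      rw [Real.volume_Icc] at hmono
      calc (volume (Γ.serve i)).toReal
          ≤ (ENNReal.ofReal (e i - s i)).toReal :=
            ENNReal.toReal_mono ENNReal.ofReal_ne_top hmono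
        _ = e i - s i := ENNReal.toReal_ofReal (sub_nonneg.2 (hse i))
    exact ⟨∑ i ∈ T, (e i - s i), ⟨T, hwcost.trans hcost, rfl⟩, hub⟩
  -- assemble
  have hBne : B.Nonempty := ⟨0, ∅, by simpa using hC, by simp⟩
  have hBfin : B.Finite := by
    apply Set.Finite.subset (Set.finite_range (fun S : Finset (Fin M) => ∑ i ∈ S, (e i - s i)))
    rintro u ⟨S, -, rfl⟩
    exact ⟨S, rfl⟩
  have hBbdd : BddAbove B := hBfin.bddAbove
  have hAle : ∀ a ∈ A, a ≤ sSup B := by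
    intro a ha
    obtain ⟨b, hb, hab⟩ := hdom a ha
    exact hab.trans (le_csSup hBbdd hb)
  refine le_antisymm (csSup_le (hBne.mono hBA) hAle) (csSup_le_csSup ⟨sSup B, hAle⟩ hBne hBA)
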